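/- Inversion of a general power: for all reals h̄ > 0, p > −1 and q < h̄ − 1, ∫₀¹ x^{h̄−q−2} · (1−x)^p · ₂F₁(h̄,h̄;2h̄;x) dx = (Γ(1+p)·Γ(h̄−q−1)/Γ(h̄+p−q)) · ₃F₂(h̄, h̄, h̄−q−1; 2h̄, h̄+p−q; 1), where ₃F₂(a₁,a₂,a₃;b₁,b₂;1) := ∑_{n=0}^∞ (a₁)_n (a₂)_n (a₃)_n / ((b₁)_n (b₂)_n n!), this series being convergent since p + 1 > 0. -/

import Mathlib

open Real

/-- Pochhammer symbol `(a)_n = a (a+1) ⋯ (a+n-1)`. -/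
noncomputable def poch (a : ℝ) (n : ℕ) : ℝ := (ascPochhammer ℝ n).eval a

/-- Gauss hypergeometric series `₂F₁(a,b;c;x)`. -/
noncomputable def F21 (a b c x : ℝ) : ℝ :=
  ∑' n : ℕ, poch a n * poch b n / (poch c n * (n.factorial : ℝ)) * x ^ n

/-- Generalized hypergeometric series `₃F₂(a₁,a₂,a₃;b₁,b₂;1)`. -/
noncomputable def F32one (a₁ a₂ a₃ b₁ b₂ : ℝ) : ℝ :=
  ∑' n : ℕ, poch a₁ n * poch a₂ n * poch a₃ n / (poch b₁ n * poch b₂ n * (n.factorial : ℝ))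

open MeasureTheory Set

lemma betaComplexEq {a b : ℝ} (x : ℝ) (hx : x ∈ Ioo (0:ℝ) 1) :
    ((x:ℂ) ^ ((a:ℂ) - 1) * (1 - (x:ℂ)) ^ ((b:ℂ) - 1))
      = ((x ^ (a-1) * (1-x) ^ (b-1) : ℝ) : ℂ) := by
  obtain ⟨h0, h1⟩ := hx
  rw [Complex.ofReal_mul, Complex.ofReal_cpow h0.le, Complex.ofReal_cpow (by linarith)]
  push_cast
  ring_nf

lemma betaComplexIntegrableOn {a b : ℝ} (ha : 0 < a) (hb : 0 < b) :
    IntegrableOn (fun x : ℝ => (x:ℂ) ^ ((a:ℂ)-1) * (1-(x:ℂ)) ^ ((b:ℂ)-1)) (Ioo 0 1) := by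
  have h := Complex.betaIntegral_convergent (u := (a:ℂ)) (v := (b:ℂ)) (by simpa) (by simpa)
  rw [intervalIntegrable_iff_integrableOn_Ioc_of_le zero_le_one] at h
  exact h.mono_set Ioo_subset_Ioc_self

lemma betaIntegrableOn {a b : ℝ} (ha : 0 < a) (hb : 0 < b) :
    IntegrableOn (fun x : ℝ => x ^ (a-1) * (1-x) ^ (b-1)) (Ioo 0 1) := by
  apply (betaComplexIntegrableOn ha hb).re.congr
  filter_upwards [ae_restrict_mem measurableSet_Ioo] with x hx
  rw [betaComplexEq x hx]
  simp

lemma betaIntegralReal {a b : ℝ} (ha : 0 < a) (hb : 0 < b) :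
    ∫ x in Ioo (0:ℝ) 1, x ^ (a-1) * (1-x) ^ (b-1)
      = Real.Gamma a * Real.Gamma b / Real.Gamma (a+b) := by
  have key := Complex.Gamma_mul_Gamma_eq_betaIntegral (s := (a:ℂ)) (t := (b:ℂ))
    (by simpa) (by simpa)
  have hab : ((Real.Gamma (a+b) : ℝ) : ℂ) ≠ 0 := by
    exact_mod_cast (Real.Gamma_pos_of_pos (by positivity : (0:ℝ) < a + b)).ne'
  have hbeta : Complex.betaIntegral a b
      = ((Real.Gamma a * Real.Gamma b / Real.Gamma (a+b) : ℝ) : ℂ) := by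
    push_cast
    rw [eq_div_iff hab, ← Complex.Gamma_ofReal, ← Complex.Gamma_ofReal, ← Complex.Gamma_ofReal,
      Complex.ofReal_add, key]
    ring
  have hIoo : Complex.betaIntegral a b
      = ∫ x in Ioo (0:ℝ) 1, (x:ℂ) ^ ((a:ℂ)-1) * (1-(x:ℂ)) ^ ((b:ℂ)-1) := by
    rw [Complex.betaIntegral, intervalIntegral.integral_of_le zero_le_one,
      MeasureTheory.integral_Ioc_eq_integral_Ioo]
  have h2 := betaComplexIntegrableOn ha hb
  calc ∫ x in Ioo (0:ℝ) 1, x ^ (a-1) * (1-x) ^ (b-1)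
      = ∫ x in Ioo (0:ℝ) 1, RCLike.re ((x:ℂ) ^ ((a:ℂ)-1) * (1-(x:ℂ)) ^ ((b:ℂ)-1)) := by
        apply setIntegral_congr_ae measurableSet_Ioo
        filter_upwards with x hx
        rw [betaComplexEq x hx]; simp
    _ = RCLike.re (∫ x in Ioo (0:ℝ) 1, (x:ℂ) ^ ((a:ℂ)-1) * (1-(x:ℂ)) ^ ((b:ℂ)-1)) :=
        integral_re h2
    _ = Real.Gamma a * Real.Gamma b / Real.Gamma (a+b) := by
        rw [← hIoo, hbeta]; simp



lemma poch_zero (a : ℝ) : poch a 0 = 1 := by simp [poch]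

lemma poch_succ (a : ℝ) (n : ℕ) : poch a (n+1) = poch a n * (a + n) := by
  simp [poch, ascPochhammer_succ_right]

lemma poch_pos {a : ℝ} (ha : 0 < a) (n : ℕ) : 0 < poch a n := by
  induction n with
  | zero => simp [poch_zero]
  | succ n ih => rw [poch_succ]; positivity

lemma Gamma_poch {a : ℝ} (ha : 0 < a) (n : ℕ) :
    Real.Gamma (a + n) = Real.Gamma a * poch a n := by
  induction n with
  | zero => simp [poch_zero]
  | succ n ih =>
    have : a + ((n:ℝ)+1) = (a + n) + 1 := by ring
    push_cast
    rw [this, Real.Gamma_add_one (by positivity), ih, poch_succ]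
    ring

lemma poch_eq {a : ℝ} (ha : 0 < a) (n : ℕ) :
    poch a n = Real.Gamma (a + n) / Real.Gamma a := by
  rw [Gamma_poch ha n]
  field_simp [(Real.Gamma_pos_of_pos ha).ne']

lemma sq_Gamma_le {x y : ℝ} (hx : 0 < x) (hy : 0 < y) :
    Real.Gamma ((x+y)/2) ^ 2 ≤ Real.Gamma x * Real.Gamma y := by
  have h := Real.convexOn_log_Gamma.2 (mem_Ioi.2 hx) (mem_Ioi.2 hy)
    (by norm_num : (0:ℝ) ≤ 1/2) (by norm_num : (0:ℝ) ≤ 1/2) (by norm_num)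
  simp only [Function.comp_apply, smul_eq_mul] at h
  have hmid : (1/2 : ℝ) * x + (1/2 : ℝ) * y = (x+y)/2 := by ring
  rw [hmid] at h
  have hgm := Real.Gamma_pos_of_pos (by positivity : (0:ℝ) < (x+y)/2)
  have hgx := Real.Gamma_pos_of_pos hx
  have hgy := Real.Gamma_pos_of_pos hy
  rw [← Real.log_le_log_iff (by positivity) (by positivity), Real.log_pow, Real.log_mul hgx.ne' hgy.ne']
  push_cast
  linarith

lemma Gamma_add_le {x u : ℝ} (hx : 0 < x) (hu0 : 0 ≤ u) (hu1 : u ≤ 1) :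
    Real.Gamma (x + u) ≤ Real.Gamma (x+1) * x ^ (u - 1) := by
  have h := Real.convexOn_log_Gamma.2 (mem_Ioi.2 hx) (mem_Ioi.2 (by linarith : (0:ℝ) < x+1))
    (by linarith : (0:ℝ) ≤ 1-u) hu0 (by ring)
  simp only [Function.comp_apply, smul_eq_mul] at h
  have hmid : (1-u) * x + u * (x+1) = x + u := by ring
  rw [hmid] at h
  have hgx := Real.Gamma_pos_of_pos hx
  have hgx1 := Real.Gamma_pos_of_pos (by linarith : (0:ℝ) < x+1)
  have hgxu := Real.Gamma_pos_of_pos (by linarith : (0:ℝ) < x+u)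
  rw [← Real.log_le_log_iff hgxu (by positivity),
    Real.log_mul hgx1.ne' (by positivity : x ^ (u-1) ≠ 0),
    Real.log_rpow hx]
  have hlog : Real.log (Real.Gamma (x+1)) = Real.log x + Real.log (Real.Gamma x) := by
    rw [Real.Gamma_add_one hx.ne', Real.log_mul hx.ne' hgx.ne']
  nlinarith [Real.log_le_log_iff hgxu hgxu]

lemma gamma_ratio_bound {s p : ℝ} (hs : 0 < s) (hp : -1 < p) {m : ℕ} (hm : 2 ≤ m) :
    Real.Gamma (s + m) * Real.Gamma (p+1) / Real.Gamma (s + m + p + 1)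
      ≤ Real.Gamma (p+1) * 2 * (m:ℝ) ^ (-(min (p+1) 1)) := by
  set t := min (p+1) 1 with htdef
  have ht0 : 0 < t := lt_min (by linarith) one_pos
  have ht1 : t ≤ 1 := min_le_right _ _
  have htp : t ≤ p + 1 := min_le_left _ _
  have hm2 : (2:ℝ) ≤ (m:ℝ) := by exact_mod_cast hm
  set X := s + m + t - 1 with hXdef
  have hX : 0 < X := by simp only [hXdef]; linarith
  -- Γ(s+m) ≤ Γ(s+m+t) * X^(-t)
  have h1 : Real.Gamma (s + m) ≤ Real.Gamma (s + m + t) * X ^ (-t) := by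
    have := Gamma_add_le hX (by linarith : (0:ℝ) ≤ 1 - t) (by linarith)
    have e1 : X + (1 - t) = s + m := by simp only [hXdef]; ring
    have e2 : X + 1 = s + m + t := by simp only [hXdef]; ring
    have e3 : (1 - t) - 1 = -t := by ring
    rwa [e1, e2, e3] at this
  -- Γ(s+m+t) ≤ Γ(s+m+p+1)
  have h2 : Real.Gamma (s + m + t) ≤ Real.Gamma (s + m + p + 1) := by
    rcases eq_or_lt_of_le htp with h | h
    · rw [show s + m + p + 1 = s + m + t by rw [h]; ring]
    · exact (Real.Gamma_strictMonoOn_Ici (by simp only [mem_Ici]; linarith)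
        (by simp only [mem_Ici]; linarith) (by linarith)).le
  -- X^(-t) ≤ 2 * m^(-t)
  have h3 : X ^ (-t) ≤ 2 * (m:ℝ) ^ (-t) := by
    have hhalf : (m:ℝ)/2 ≤ X := by simp only [hXdef]; linarith
    have hmpos : (0:ℝ) < (m:ℝ)/2 := by linarith
    calc X ^ (-t) ≤ ((m:ℝ)/2) ^ (-t) := by
          rw [Real.rpow_neg hX.le, Real.rpow_neg hmpos.le]
          exact inv_anti₀ (Real.rpow_pos_of_pos hmpos t) (Real.rpow_le_rpow hmpos.le hhalf ht0.le)
      _ = (2:ℝ) ^ t * (m:ℝ) ^ (-t) := by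
          rw [Real.div_rpow (by positivity) (by norm_num), Real.rpow_neg (by positivity),
            Real.rpow_neg (by norm_num)]
          field_simp
      _ ≤ 2 * (m:ℝ) ^ (-t) := by
          have : (2:ℝ) ^ t ≤ 2 := by
            calc (2:ℝ) ^ t ≤ (2:ℝ) ^ (1:ℝ) := Real.rpow_le_rpow_of_exponent_le one_le_two ht1
              _ = 2 := Real.rpow_one 2
          exact mul_le_mul_of_nonneg_right this (Real.rpow_pos_of_pos (by linarith) _).le
  have hg1 := Real.Gamma_pos_of_pos (by linarith : (0:ℝ) < p + 1)
  have hgd := Real.Gamma_pos_of_pos (by linarith : (0:ℝ) < s + m + p + 1)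
  rw [div_le_iff₀ hgd]
  calc Real.Gamma (s + m) * Real.Gamma (p+1)
      ≤ (Real.Gamma (s + m + t) * X ^ (-t)) * Real.Gamma (p+1) :=
        mul_le_mul_of_nonneg_right h1 hg1.le
    _ ≤ (Real.Gamma (s + m + p + 1) * (2 * (m:ℝ) ^ (-t))) * Real.Gamma (p+1) := by
        apply mul_le_mul_of_nonneg_right _ hg1.le
        exact mul_le_mul h2 h3 (Real.rpow_pos_of_pos hX _).le hgd.le
    _ = Real.Gamma (p+1) * 2 * (m:ℝ) ^ (-t) * Real.Gamma (s + m + p + 1) := by ring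

lemma poch_sq_bound {hb : ℝ} (hhb : 0 < hb) {m : ℕ} (hm : 1 ≤ m) :
    poch hb m * poch hb m / (poch (2*hb) m * (m.factorial : ℝ))
      ≤ (Real.Gamma (2*hb) / Real.Gamma hb ^ 2) / m := by
  have h2hb : (0:ℝ) < 2 * hb := by linarith
  have hmR : (0:ℝ) < (m:ℝ) := by exact_mod_cast hm
  have hghb := Real.Gamma_pos_of_pos hhb
  have hg2hb := Real.Gamma_pos_of_pos h2hb
  have hgm := Real.Gamma_pos_of_pos hmR
  have hg2hbm := Real.Gamma_pos_of_pos (by positivity : (0:ℝ) < 2*hb + m)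
  have hghbm := Real.Gamma_pos_of_pos (by positivity : (0:ℝ) < hb + m)
  -- key: Γ(hb+m)^2 ≤ Γ(m) Γ(2hb+m)
  have key : Real.Gamma (hb + m) ^ 2 ≤ Real.Gamma m * Real.Gamma (2*hb + m) := by
    have := sq_Gamma_le hmR (by positivity : (0:ℝ) < 2*hb + m)
    rwa [show ((m:ℝ) + (2*hb + m))/2 = hb + m by ring] at this
  -- m! = m * Γ m
  have hfact : (m.factorial : ℝ) = (m:ℝ) * Real.Gamma m := by
    rw [← Real.Gamma_nat_eq_factorial m, Real.Gamma_add_one hmR.ne']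
  rw [poch_eq hhb, poch_eq h2hb, div_le_div_iff₀ (by positivity) hmR, hfact]
  have key2 := mul_le_mul_of_nonneg_right key (by positivity : (0:ℝ) ≤ (m:ℝ) * Real.Gamma (2*hb))
  have key3 := mul_le_mul_of_nonneg_right key2
    (by positivity : (0:ℝ) ≤ Real.Gamma hb * Real.Gamma hb)
  field_simp
  rw [mul_comm hb 2]
  nlinarith [key3]

lemma summable_T {hb s p : ℝ} (hhb : 0 < hb) (hs : 0 < s) (hp : -1 < p) :
    Summable (fun n : ℕ => (poch hb n * poch hb n / (poch (2*hb) n * (n.factorial:ℝ)))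
      * (Real.Gamma (s+n) * Real.Gamma (p+1) / Real.Gamma (s+n+p+1))) := by
  set t := min (p+1) 1 with htdef
  have ht0 : 0 < t := lt_min (by linarith) one_pos
  have ht1 : t ≤ 1 := min_le_right _ _
  set K1 := Real.Gamma (2*hb) / Real.Gamma hb ^ 2 with hK1
  have hK1pos : 0 < K1 := by
    have := Real.Gamma_pos_of_pos hhb
    have := Real.Gamma_pos_of_pos (by linarith : (0:ℝ) < 2*hb)
    positivity
  have hg1 := Real.Gamma_pos_of_pos (by linarith : (0:ℝ) < p+1)
  set C := K1 * (Real.Gamma (p+1) * 2) with hC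
  rw [← summable_nat_add_iff 2]
  have hsummand : Summable (fun n : ℕ => C * ((n:ℝ)+2) ^ (-(1+t))) := by
    have h0 : Summable (fun n : ℕ => (n:ℝ) ^ (-(1+t))) :=
      Real.summable_nat_rpow.mpr (by linarith)
    have h1 := (summable_nat_add_iff 2).mpr h0
    apply Summable.mul_left
    apply h1.congr
    intro n
    push_cast
    ring_nf
  apply Summable.of_nonneg_of_le _ _ hsummand
  · intro n
    have hpp := poch_pos hhb (n+2)
    have hpp2 := poch_pos (by linarith : (0:ℝ) < 2*hb) (n+2)
    have hfp : (0:ℝ) < ((n+2).factorial : ℝ) := by positivity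
    have := Real.Gamma_pos_of_pos (by positivity : (0:ℝ) < s + (n+2:ℕ))
    have := Real.Gamma_pos_of_pos (by
      have : (0:ℝ) ≤ ((n+2:ℕ):ℝ) := by positivity
      nlinarith [this] : (0:ℝ) < s + (n+2:ℕ) + p + 1)
    positivity
  · intro n
    set m : ℕ := n + 2 with hm
    have hm2 : 2 ≤ m := by omega
    have hmR : (0:ℝ) < (m:ℝ) := by positivity
    have hb1 := poch_sq_bound hhb (by omega : 1 ≤ m)
    have hb2 := gamma_ratio_bound hs hp hm2
    have hbeta_nonneg : 0 ≤ Real.Gamma (s+m) * Real.Gamma (p+1) / Real.Gamma (s+m+p+1) := by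
      have := Real.Gamma_pos_of_pos (by positivity : (0:ℝ) < s + (m:ℝ))
      have h2 : (0:ℝ) < s + m + p + 1 := by nlinarith [hmR]
      have := Real.Gamma_pos_of_pos h2
      positivity
    have hcle : poch hb m * poch hb m / (poch (2*hb) m * (m.factorial:ℝ)) ≤ K1 / m := hb1
    have hprod := mul_le_mul hcle hb2 hbeta_nonneg (by positivity : (0:ℝ) ≤ K1 / m)
    calc poch hb m * poch hb m / (poch (2*hb) m * (m.factorial:ℝ))
          * (Real.Gamma (s+m) * Real.Gamma (p+1) / Real.Gamma (s+m+p+1))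
        ≤ (K1 / m) * (Real.Gamma (p+1) * 2 * (m:ℝ) ^ (-t)) := hprod
      _ = C * ((m:ℝ) ^ (-(1:ℝ)) * (m:ℝ) ^ (-t)) := by
          rw [Real.rpow_neg_one]
          field_simp [hC]
          ring
      _ = C * ((n:ℝ)+2) ^ (-(1+t)) := by
          rw [← Real.rpow_add hmR, show -(1:ℝ) + -t = -(1+t) by ring]
          norm_num [hm]

lemma betaIntegrableOn2 {a b : ℝ} (ha : 0 < a) (hb : -1 < b) :
    MeasureTheory.IntegrableOn (fun x : ℝ => x ^ (a-1) * (1-x) ^ b) (Ioo 0 1) := by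
  have h := betaIntegrableOn ha (by linarith : (0:ℝ) < b + 1)
  simpa only [add_sub_cancel_right] using h

lemma betaIntegralReal2 {a b : ℝ} (ha : 0 < a) (hb : -1 < b) :
    ∫ x in Ioo (0:ℝ) 1, x ^ (a-1) * (1-x) ^ b
      = Real.Gamma a * Real.Gamma (b+1) / Real.Gamma (a+b+1) := by
  have h := betaIntegralReal ha (by linarith : (0:ℝ) < b + 1)
  simpa only [add_sub_cancel_right, ← add_assoc] using h

/-- inversion of a general power.  For h̄ > 0, p > −1, q < h̄ − 1:
`∫₀¹ x^{h̄−q−2}(1−x)^p ₂F₁(h̄,h̄;2h̄;x) dx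
  = (Γ(1+p)Γ(h̄−q−1)/Γ(h̄+p−q))·₃F₂(h̄,h̄,h̄−q−1;2h̄,h̄+p−q;1)`. -/
theorem inversion_general_power (hb p q : ℝ) (hhb : 0 < hb) (hp : -1 < p)
    (hq : q < hb - 1) :
    (∫ x in (0 : ℝ)..1, x ^ (hb - q - 2) * (1 - x) ^ p * F21 hb hb (2 * hb) x)
      = Real.Gamma (1 + p) * Real.Gamma (hb - q - 1) / Real.Gamma (hb + p - q)
          * F32one hb hb (hb - q - 1) (2 * hb) (hb + p - q) := by
  set s := hb - q - 1 with hsdef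
  have hs0 : 0 < s := by simp only [hsdef]; linarith
  have hsp : hb + p - q = s + p + 1 := by simp only [hsdef]; ring
  have h2hb : (0:ℝ) < 2 * hb := by linarith
  have hgs := Real.Gamma_pos_of_pos hs0
  have hgp1 := Real.Gamma_pos_of_pos (by linarith : (0:ℝ) < p + 1)
  have hgsp1 := Real.Gamma_pos_of_pos (by linarith : (0:ℝ) < s + p + 1)
  set c : ℕ → ℝ := fun n => poch hb n * poch hb n / (poch (2*hb) n * (n.factorial:ℝ)) with hcdef
  set F : ℕ → ℝ → ℝ := fun n x => c n * (x ^ (s + n - 1) * (1-x) ^ p) with hFdef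
  have hcpos : ∀ n, 0 < c n := fun n => by
    have := poch_pos hhb n; have := poch_pos h2hb n
    have : (0:ℝ) < (n.factorial : ℝ) := by positivity
    simp only [hcdef]; positivity
  have hsn : ∀ n : ℕ, (0:ℝ) < s + n := fun n => by positivity
  have hsnp : ∀ n : ℕ, (0:ℝ) < s + n + p + 1 := fun n => by
    have : (0:ℝ) ≤ (n:ℝ) := by positivity
    linarith
  -- integrability of each term
  have hInt : ∀ n : ℕ, MeasureTheory.IntegrableOn (F n) (Ioo 0 1) := fun n => by
    simp only [hFdef]
    exact (betaIntegrableOn2 (hsn n) hp).const_mul (c n)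
  -- value of each term integral
  have hval : ∀ n : ℕ, (∫ x in Ioo (0:ℝ) 1, F n x)
      = c n * (Real.Gamma (s+n) * Real.Gamma (p+1) / Real.Gamma (s+n+p+1)) := fun n => by
    simp only [hFdef]
    rw [MeasureTheory.integral_const_mul, betaIntegralReal2 (hsn n) hp]
  have hnorm : ∀ n : ℕ, (∫ x in Ioo (0:ℝ) 1, ‖F n x‖)
      = c n * (Real.Gamma (s+n) * Real.Gamma (p+1) / Real.Gamma (s+n+p+1)) := fun n => by
    rw [← hval n]
    apply MeasureTheory.setIntegral_congr_ae measurableSet_Ioo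
    filter_upwards with x hx
    apply Real.norm_of_nonneg
    have hx0 : (0:ℝ) < x := hx.1
    have hx1 : x < 1 := hx.2
    have := (hcpos n).le
    have h1 : (0:ℝ) ≤ x ^ (s + n - 1) := Real.rpow_nonneg hx0.le _
    have h2 : (0:ℝ) ≤ (1-x) ^ p := Real.rpow_nonneg (by linarith) _
    simp only [hFdef]; positivity
  have hSum : Summable (fun n : ℕ => ∫ x in Ioo (0:ℝ) 1, ‖F n x‖) := by
    apply (summable_T hhb hs0 hp).congr
    intro n
    rw [hnorm n]
  -- main computation
  rw [intervalIntegral.integral_of_le zero_le_one, MeasureTheory.integral_Ioc_eq_integral_Ioo]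
  have hptwise : ∀ x ∈ Ioo (0:ℝ) 1,
      x ^ (hb - q - 2) * (1 - x) ^ p * F21 hb hb (2 * hb) x = ∑' n : ℕ, F n x := by
    intro x hx
    have hx0 : (0:ℝ) < x := hx.1
    rw [F21, ← tsum_mul_left]
    apply tsum_congr
    intro n
    simp only [hFdef, hcdef]
    rw [show hb - q - 2 = s - 1 by simp only [hsdef]; ring]
    rw [← Real.rpow_natCast x n]
    have hxp : x ^ (s + (n:ℝ) - 1) = x ^ (s - 1) * x ^ (n:ℝ) := by
      rw [← Real.rpow_add hx0]; ring_nf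
    rw [hxp]; ring
  rw [MeasureTheory.setIntegral_congr_fun measurableSet_Ioo hptwise]
  rw [← MeasureTheory.integral_tsum_of_summable_integral_norm hInt hSum]
  -- now evaluate the series
  rw [show (1:ℝ) + p = p + 1 by ring, hsp]
  have hterm : ∀ n : ℕ, (∫ x in Ioo (0:ℝ) 1, F n x)
      = (Real.Gamma (p+1) * Real.Gamma s / Real.Gamma (s+p+1))
        * (poch hb n * poch hb n * poch s n /
            (poch (2*hb) n * poch (s+p+1) n * (n.factorial:ℝ))) := by
    intro n
    rw [hval n, Gamma_poch hs0 n,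
      show s + (n:ℝ) + p + 1 = (s+p+1) + (n:ℝ) by ring, Gamma_poch (by linarith) n]
    have h1 := (poch_pos hhb n).ne'
    have h2 := (poch_pos h2hb n).ne'
    have h3 := (poch_pos hs0 n).ne'
    have h4 := (poch_pos (by linarith : (0:ℝ) < s+p+1) n).ne'
    have h5 : ((n.factorial:ℝ)) ≠ 0 := by positivity
    simp only [hcdef]
    field_simp
  rw [tsum_congr hterm, tsum_mul_left, F32one]
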